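/- Let R be a commutative Noetherian integral domain, n a positive integer, and M a finitely generated R[n]-module. Then M is torsion free (i.e. no nonzero element of M is annihilated by a non-zero-divisor of R[n]) if and only if M is isomorphic as an R[n]-module to a submodule of a finitely generated free R[n]-module. -/

import Mathlib

open Polynomial

noncomputable section

/-- The primitive multiple ring `R[n] = R[t]/(t^n)`. -/
abbrev Rn (R : Type*) [CommRing R] (n : ℕ) : Type _ :=
  Polynomial R ⧸ Ideal.span {(X : Polynomial R) ^ n}

/-- The class `t` of the variable in `R[n]`. -/
def tn (R : Type*) [CommRing R] (n : ℕ) : Rn R n :=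
  Ideal.Quotient.mk _ X

/-- `R[k] = R[n]/(t^k)` as an `R[n]`-module (for `k ≤ n` this is `R[t]/(t^k)`
with the `R[n]`-module structure coming from the natural surjection `R[n] → R[k]`). -/
abbrev Rmod (R : Type*) [CommRing R] (n k : ℕ) : Type _ :=
  Rn R n ⧸ (Ideal.span {tn R n ^ k})

/-- The constant term homomorphism `R[n] → R` (for `n > 0`). -/
def ct (R : Type*) [CommRing R] (n : ℕ) (hn : 0 < n) : Rn R n →+* R :=
  Ideal.Quotient.lift _ (evalRingHom 0) (by
    intro a ha
    rw [Ideal.mem_span_singleton] at ha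
    obtain ⟨c, rfl⟩ := ha
    simp [zero_pow hn.ne'])

section Modules

variable (R : Type*) [CommRing R] (n : ℕ) (M : Type*) [AddCommGroup M] [Module (Rn R n) M]

/-- The submodule `M_i = t^i M` of an `R[n]`-module `M`. -/
def tMi (i : ℕ) : Submodule (Rn R n) M :=
  LinearMap.range (LinearMap.lsmul (Rn R n) M (tn R n ^ i))

/-- The submodule `M^{(i)} = {m ∈ M : t^i m = 0}` of an `R[n]`-module `M`. -/
def kt (i : ℕ) : Submodule (Rn R n) M :=
  LinearMap.ker (LinearMap.lsmul (Rn R n) M (tn R n ^ i))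

/-- `G_i(M) = t^i M / t^{i+1} M`. -/
abbrev Gi (i : ℕ) :=
  (tMi R n M i) ⧸ (Submodule.comap (tMi R n M i).subtype (tMi R n M (i + 1)))

/-- `G^{(i+1)}(M) = M^{(i+1)}/M^{(i)}` (note the shift by one in the indexing:
`Gup R n M i` is `G^{(i+1)}(M)`). -/
abbrev Gup (i : ℕ) :=
  (kt R n M (i + 1)) ⧸ (Submodule.comap (kt R n M (i + 1)).subtype (kt R n M i))

lemma tMi_succ_mem {i : ℕ} {x : M} (hx : x ∈ tMi R n M i) :
    tn R n • x ∈ tMi R n M (i + 1) := by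
  obtain ⟨m, rfl⟩ := hx
  exact ⟨m, by simp [LinearMap.lsmul_apply, smul_smul, pow_succ']⟩

lemma kt_pred_mem {i : ℕ} {x : M} (hx : x ∈ kt R n M (i + 1)) :
    tn R n • x ∈ kt R n M i := by
  simp only [kt, LinearMap.mem_ker, LinearMap.lsmul_apply] at hx ⊢
  rw [smul_smul, ← pow_succ]
  exact hx

/-- `μ_i : G_i(M) → G_{i+1}(M)`, induced by multiplication by `t`. -/
def muMap (i : ℕ) : Gi R n M i →ₗ[Rn R n] Gi R n M (i + 1) :=
  Submodule.mapQ _ _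
    (LinearMap.restrict (LinearMap.lsmul (Rn R n) M (tn R n))
      (fun _ hx => tMi_succ_mem R n M hx))
    (fun x hx => by
      simp only [Submodule.mem_comap] at hx ⊢
      exact tMi_succ_mem R n M hx)

/-- `λ_{i+1} : G^{(i+2)}(M) → G^{(i+1)}(M)`, induced by multiplication by `t`
(with the shifted indexing, `lamMap R n M i : Gup (i+1) → Gup i`). -/
def lamMap (i : ℕ) : Gup R n M (i + 1) →ₗ[Rn R n] Gup R n M i :=
  Submodule.mapQ _ _
    (LinearMap.restrict (LinearMap.lsmul (Rn R n) M (tn R n))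
      (fun _ hx => kt_pred_mem R n M hx))
    (fun x hx => by
      simp only [Submodule.mem_comap] at hx ⊢
      exact kt_pred_mem R n M hx)

/-- The composition `μ_{k-1} ∘ ... ∘ μ_0 : G_0(M) → G_k(M)`. -/
def muComp : (k : ℕ) → (Gi R n M 0 →ₗ[Rn R n] Gi R n M k)
  | 0 => LinearMap.id
  | (k + 1) => (muMap R n M k).comp (muComp k)

/-- The composition `λ_1 ∘ ... ∘ λ_k : G^{(k+1)}(M) → G^{(1)}(M)`. -/
def lamComp : (k : ℕ) → (Gup R n M k →ₗ[Rn R n] Gup R n M 0)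
  | 0 => LinearMap.id
  | (k + 1) => (lamComp k).comp (lamMap R n M k)

end Modules


section Aux

open Polynomial

variable {R : Type*} [CommRing R] {n : ℕ}

lemma Rn.algebraMap_eq (r : R) :
    algebraMap R (Rn R n) r = Ideal.Quotient.mk _ (C r) := rfl

lemma Rn.tn_pow_eq (k : ℕ) : (tn R n) ^ k = Ideal.Quotient.mk _ ((X : Polynomial R) ^ k) := by
  simp [tn]

lemma Rn.tn_pow_eq_zero {k : ℕ} (hk : n ≤ k) : (tn R n) ^ k = (0 : Rn R n) := by
  rw [Rn.tn_pow_eq, Ideal.Quotient.eq_zero_iff_mem, Ideal.mem_span_singleton]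
  exact pow_dvd_pow _ hk

lemma Rn.indep (hn : 0 < n) (c : ℕ → R)
    (h : (∑ j ∈ Finset.range n, algebraMap R (Rn R n) (c j) * (tn R n) ^ j) = 0) :
    ∀ j < n, c j = 0 := by
  have : Ideal.Quotient.mk (Ideal.span {(X : Polynomial R) ^ n})
      (∑ j ∈ Finset.range n, C (c j) * X ^ j) = 0 := by
    rw [map_sum]
    simpa [Rn.algebraMap_eq, Rn.tn_pow_eq] using h
  rw [Ideal.Quotient.eq_zero_iff_mem, Ideal.mem_span_singleton] at this
  rw [X_pow_dvd_iff] at this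
  intro j hj
  have := this j hj
  simpa [coeff_C_mul, coeff_X_pow, Finset.sum_ite_eq', hj] using this

instance Rn.finite : Module.Finite R (Rn R n) := by
  classical
  refine ⟨⟨(Finset.range (n+1)).image (fun j => (tn R n) ^ j), ?_⟩⟩
  rw [eq_top_iff]
  rintro a -
  obtain ⟨p, rfl⟩ := Ideal.Quotient.mk_surjective a
  induction p using Polynomial.induction_on' with
  | add p q hp hq => rw [map_add]; exact Submodule.add_mem _ hp hq
  | monomial k r =>
    rcases le_or_gt k n with hk | hk
    · have : (Ideal.Quotient.mk (Ideal.span {(X : Polynomial R) ^ n})) (monomial k r)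
          = r • (tn R n) ^ k := by
        rw [Rn.tn_pow_eq, ← smul_X_eq_monomial, ← Ideal.Quotient.mkₐ_eq_mk R, map_smul]
      rw [this]
      exact Submodule.smul_mem _ _ (Submodule.subset_span
        (Finset.mem_coe.2 (Finset.mem_image.2 ⟨k, Finset.mem_range.2 (by omega), rfl⟩)))
    · have : (Ideal.Quotient.mk (Ideal.span {(X : Polynomial R) ^ n})) (monomial k r) = 0 := by
        rw [Ideal.Quotient.eq_zero_iff_mem, Ideal.mem_span_singleton, ← C_mul_X_pow_eq_monomial]
        exact Dvd.dvd.mul_left (pow_dvd_pow _ hk.le) _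
      rw [this]; exact Submodule.zero_mem _

lemma Rn.algebraMap_mem_nonZeroDivisors [IsDomain R] (hn : 0 < n) {r : R} (hr : r ≠ 0) :
    algebraMap R (Rn R n) r ∈ nonZeroDivisors (Rn R n) := by
  rw [mem_nonZeroDivisors_iff_right]
  intro a ha
  obtain ⟨p, rfl⟩ := Ideal.Quotient.mk_surjective a
  rw [Rn.algebraMap_eq, ← map_mul, Ideal.Quotient.eq_zero_iff_mem,
    Ideal.mem_span_singleton, X_pow_dvd_iff] at ha
  rw [Ideal.Quotient.eq_zero_iff_mem, Ideal.mem_span_singleton, X_pow_dvd_iff]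
  intro d hd
  have := ha d hd
  rw [coeff_mul_C] at this
  exact (mul_eq_zero.1 this).resolve_right hr

lemma Rn.adjoin_tn : Algebra.adjoin R {tn R n} = ⊤ := by
  have hs : Function.Surjective (Ideal.Quotient.mkₐ R (Ideal.span {(X : Polynomial R) ^ n})) :=
    Ideal.Quotient.mk_surjective
  have : ({tn R n} : Set (Rn R n)) =
      (Ideal.Quotient.mkₐ R (Ideal.span {(X : Polynomial R) ^ n})) '' {X} := by
    simp only [Set.image_singleton, Ideal.Quotient.mkₐ_eq_mk]; rfl
  rw [this, ← AlgHom.map_adjoin, Polynomial.adjoin_X, Algebra.map_top]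
  exact (AlgHom.range_eq_top _).2 hs

/-- A finitely generated torsion-free module over a domain embeds into a
finite free module. -/
lemma embed_free_of_torsionfree {R : Type*} [CommRing R] [IsDomain R]
    (M : Type*) [AddCommGroup M] [Module R M] [Module.Finite R M]
    (htf : ∀ (r : R) (x : M), r ≠ 0 → r • x = 0 → x = 0) :
    ∃ (m : ℕ) (g : M →ₗ[R] (Fin m → R)), Function.Injective g := by
  classical
  set S := nonZeroDivisors R
  let K := FractionRing R
  let V := LocalizedModule S M
  let ι : M →ₗ[R] V := LocalizedModule.mkLinearMap S M
  have hι : Function.Injective ι := by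
    rw [← LinearMap.ker_eq_bot, eq_bot_iff]
    intro x hx
    obtain ⟨r, hrS, hr⟩ := LocalizedModule.mem_ker_mkLinearMap_iff.1 hx
    exact htf r x (nonZeroDivisors.ne_zero hrS) hr
  haveI : Module.Finite K V :=
    Module.Finite.of_isLocalizedModule S (Rₚ := K) (LocalizedModule.mkLinearMap S M)
  let d := Module.finrank K V
  let b : Module.Basis (Fin d) K V := Module.finBasis K V
  obtain ⟨m, f, hf⟩ := Module.Finite.exists_fin (R := R) (M := M)
  have halg : Function.Injective (algebraMap R K) := IsFractionRing.injective R K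
  obtain ⟨c, hc⟩ := IsLocalization.exist_integer_multiples_of_finite S
    (fun p : Fin m × Fin d => b.coord p.2 (ι (f p.1)))
  -- the scaled coordinate maps
  let q : Fin d → (M →ₗ[R] K) := fun i =>
    (c : R) • (((b.coord i).restrictScalars R).comp ι)
  let N : Submodule R K := LinearMap.range (Algebra.linearMap R K)
  have hq : ∀ (x : M) (i : Fin d), q i x ∈ N := by
    intro x i
    have hx : x ∈ Submodule.span R (Set.range f) := hf ▸ Submodule.mem_top
    induction hx using Submodule.span_induction with
    | mem y hy =>
      obtain ⟨j, rfl⟩ := hy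
      obtain ⟨r, hr⟩ := hc (j, i)
      exact ⟨r, by simpa [q, Algebra.linearMap_apply, Submonoid.smul_def] using hr⟩
    | zero => simp
    | add y z _ _ hy hz => rw [map_add]; exact N.add_mem hy hz
    | smul r y _ hy => rw [map_smul]; exact N.smul_mem r hy
  let e : R ≃ₗ[R] N := LinearEquiv.ofInjective (Algebra.linearMap R K) halg
  refine ⟨d, LinearMap.pi (fun i => (e.symm : N →ₗ[R] R).comp
    ((q i).codRestrict N (fun x => hq x i))), ?_⟩
  rw [← LinearMap.ker_eq_bot, eq_bot_iff]
  intro x hx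
  simp only [LinearMap.mem_ker, LinearMap.pi_apply] at hx
  have hq0 : ∀ i, q i x = 0 := by
    intro i
    have := congrFun hx i
    have h2 : ((q i).codRestrict N (fun x => hq x i)) x = 0 := by
      have := congrArg e this
      simpa using this
    simpa using congrArg (Subtype.val) h2
  have hcoord : ∀ i, b.coord i (ι x) = 0 := by
    intro i
    have := hq0 i
    simp only [q, LinearMap.smul_apply, LinearMap.coe_comp, LinearMap.coe_restrictScalars,
      Function.comp_apply, Module.Basis.coord_apply] at this
    have hc0 : algebraMap R K (c : R) ≠ 0 := fun h => nonZeroDivisors.ne_zero c.2 (halg (by simpa using h))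
    rw [Algebra.smul_def, mul_eq_zero] at this
    simpa using this.resolve_left hc0
  have : ι x = 0 := by
    have : b.repr (ι x) = 0 := Finsupp.ext fun i => hcoord i
    simpa using congrArg b.repr.symm this
  rw [Submodule.mem_bot]
  exact hι (by simpa using this)

end Aux

set_option maxHeartbeats 2000000 in
/-- A finitely generated `R[n]`-module is torsion free iff it is isomorphic to a
submodule of a finitely generated free `R[n]`-module. -/
theorem torsionFree_iff_submodule_of_free
    {R : Type*} [CommRing R] [IsDomain R] [IsNoetherianRing R]
    (n : ℕ) (hn : 0 < n)
    (M : Type*) [AddCommGroup M] [Module (Rn R n) M] [Module.Finite (Rn R n) M] :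
    Submodule.torsion (Rn R n) M = ⊥ ↔
      ∃ (k : ℕ) (f : M →ₗ[Rn R n] (Fin k → Rn R n)), Function.Injective f := by
  classical
  constructor
  · intro htor
    obtain ⟨k, rfl⟩ : ∃ k, n = k + 1 := ⟨n - 1, by omega⟩
    set A := Rn R (k + 1) with hA
    set t : A := tn R (k + 1) with ht
    letI : Module R M := Module.compHom M (algebraMap R A)
    haveI : IsScalarTower R A M := by
      refine ⟨fun r a x => ?_⟩
      obtain ⟨p, rfl⟩ := Ideal.Quotient.mk_surjective a
      have h1 : r • (Ideal.Quotient.mk (Ideal.span {(X : Polynomial R) ^ (k+1)}) p)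
          = Ideal.Quotient.mk _ (r • p) := rfl
      rw [h1, Polynomial.smul_eq_C_mul, map_mul, mul_smul]
      rfl
    haveI : Module.Finite R M := Module.Finite.trans A M
    have htf : ∀ (r : R) (x : M), r ≠ 0 → r • x = 0 → x = 0 := by
      intro r x hr hrx
      have hx : x ∈ Submodule.torsion A M :=
        ⟨⟨algebraMap R A r, Rn.algebraMap_mem_nonZeroDivisors (Nat.succ_pos k) hr⟩, by
          show algebraMap R A r • x = 0
          rw [algebraMap_smul]; exact hrx⟩
      rwa [htor, Submodule.mem_bot] at hx
    obtain ⟨m, g, hg⟩ := embed_free_of_torsionfree M htf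
    have htzero : t ^ (k + 1) = (0 : A) := Rn.tn_pow_eq_zero le_rfl
    let ι : (Fin m → R) →ₗ[R] (Fin m → A) := (Algebra.linearMap R A).compLeft (Fin m)
    have hιapp : ∀ (v : Fin m → R) (i : Fin m), ι v i = algebraMap R A (v i) := fun v i => rfl
    let G : M →ₗ[R] (Fin m → A) := ∑ j ∈ Finset.range (k + 1),
      ((LinearMap.lsmul A (Fin m → A) (t ^ (k - j))).restrictScalars R) ∘ₗ ι ∘ₗ g ∘ₗ
        ((LinearMap.lsmul A M (t ^ j)).restrictScalars R)
    have hGapp : ∀ x : M, G x = ∑ j ∈ Finset.range (k + 1),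
        t ^ (k - j) • (ι (g (t ^ j • x))) := by
      intro x
      simp [G, LinearMap.sum_apply]
    have hGt : ∀ x : M, G (t • x) = t • G x := by
      intro x
      set w : ℕ → (Fin m → A) := fun j => ι (g (t ^ j • x)) with hw
      have e1 : G (t • x) = ∑ j ∈ Finset.range (k + 1), t ^ (k - j) • w (j + 1) := by
        rw [hGapp]
        refine Finset.sum_congr rfl fun j hj => ?_
        simp only [hw]
        rw [smul_smul, ← pow_succ]
      have e2 : t • G x = ∑ j ∈ Finset.range (k + 1), t ^ (k + 1 - j) • w j := by
        rw [hGapp, Finset.smul_sum]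
        refine Finset.sum_congr rfl fun j hj => ?_
        simp only [hw]
        funext i
        simp only [Pi.smul_apply, smul_eq_mul]
        rw [← mul_assoc, ← pow_succ']
        have : k - j + 1 = k + 1 - j := by
          have := Finset.mem_range.1 hj; omega
        rw [this]
      have hwlast : w (k + 1) = 0 := by
        simp only [hw]
        rw [htzero]
        exact (congrArg (fun y => ι (g y)) (zero_smul A x)).trans (by rw [map_zero, map_zero])
      rw [e1, e2, Finset.sum_range_succ, Finset.sum_range_succ', hwlast, smul_zero, add_zero]
      have h2 : t ^ (k + 1 - 0) • w 0 = 0 := by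
        rw [Nat.sub_zero, htzero]
        exact zero_smul A (w 0)
      rw [h2, add_zero]
      refine Finset.sum_congr rfl fun j hj => ?_
      have he : k + 1 - (j + 1) = k - j := by omega
      rw [he]
    have hS : ∀ (a : A) (x : M), G (a • x) = a • G x := by
      have hmem : ∀ a : A, a ∈ (⊤ : Subalgebra R A) → ∀ x : M, G (a • x) = a • G x := by
        rw [← Rn.adjoin_tn]
        intro a ha
        induction ha using Algebra.adjoin_induction with
        | mem y hy =>
          rw [Set.mem_singleton_iff] at hy
          subst hy
          exact hGt
        | algebraMap r =>
          intro x
          rw [algebraMap_smul, map_smul, algebraMap_smul]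
        | add y z _ _ hy hz =>
          intro x
          rw [add_smul, map_add, hy, hz, add_smul]
        | mul y z _ _ hy hz =>
          intro x
          rw [mul_smul, hy, hz]
          funext i
          simp only [Pi.smul_apply, smul_eq_mul, mul_assoc]
      exact fun a => hmem a trivial
    let F : M →ₗ[A] (Fin m → A) :=
      { toFun := G, map_add' := fun x y => G.map_add x y, map_smul' := fun a x => hS a x }
    refine ⟨m, F, ?_⟩
    rw [← LinearMap.ker_eq_bot, eq_bot_iff]
    intro x hx
    have hGx : G x = 0 := hx
    have hgx : g x = 0 := by
      funext i
      have hsum := congrFun ((hGapp x).symm.trans hGx) i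
      simp only [Finset.sum_apply, Pi.smul_apply, Pi.zero_apply, hιapp, smul_eq_mul] at hsum
      have hi' : ∑ j ∈ Finset.range (k + 1),
          algebraMap R A (g (t ^ j • x) i) * t ^ (k - j) = 0 := by
        rw [← hsum]
        exact Finset.sum_congr rfl fun j hj => mul_comm _ _
      have h0 := Rn.indep (Nat.succ_pos k) (fun j => g (t ^ (k - j) • x) i) ?_
      · have := h0 k (by omega)
        simpa using this
      · rw [← Finset.sum_range_reflect]
        refine Eq.trans (Finset.sum_congr rfl fun j hj => ?_) hi'
        have e1 : k.succ - 1 - j = k - j := by omega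
        have e2 : k - (k - j) = j := by
          have := Finset.mem_range.1 hj; omega
        rw [e1]
        simp only [e2]
        rfl
    rw [Submodule.mem_bot]
    exact hg (show g x = g 0 by rw [hgx, map_zero])
  · rintro ⟨k, f, hf⟩
    rw [eq_bot_iff]
    rintro x ⟨⟨a, ha⟩, hax⟩
    have h0 : a • f x = 0 := by
      rw [← map_smul]
      have : a • x = 0 := hax
      rw [this, map_zero]
    have : f x = 0 := by
      funext i
      have := congrFun h0 i
      simp only [Pi.smul_apply, smul_eq_mul, Pi.zero_apply] at this
      exact mem_nonZeroDivisors_iff_right.1 ha _ (by rwa [mul_comm])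
    rw [Submodule.mem_bot]
    exact hf (by rw [this, map_zero])
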